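/- Let r ≥ 1, let s_1,…,s_r be positive integers, set d_i := s_i+⋯+s_r, and let Q_1,…,Q_{r−1} ∈ F[t] be polynomials with deg Q_k ≤ μ_k and with every coefficient of Q_k of absolute value ≤ q^{s_k·q/(q−1)}. Fix an integer n ≥ 0, indices 1 ≤ ℓ ≤ i ≤ r, 1 ≤ j ≤ d_i, and a weakly increasing chain of integers ℓ = k_0 ≤ k_1 ≤ ⋯ ≤ k_n = i. Then, in F[[t]], the Gauss norm satisfies ‖(t−θ^{q^n})^{d_i−j}·Π_{m=1}^{n} (Π_{k_{m−1}≤k<k_m} Q_k^{(m−1)})·((t−θ^{q^m})^{d_{k_m}})^{−1}‖_θ ≤ q^{α}, where α := Σ_{ℓ≤k<i} μ_k + d_ℓ·q/(q−1) − (j + d_i/(q−1))·q^n ∈ ℝ, (t−θ^{q^m})^{−1} denotes the inverse in F[[t]], and empty products equal 1. (This is the key Gauss-norm estimate in the proof of Proposition 4.2 of the paper.) -/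

import Mathlib

open PowerSeries Filter Topology
open scoped ENNReal

noncomputable section

variable {F : Type*} [NormedField F]

/-- Gauss norm `‖f‖_θ = sup_m |c_m|·q^m ∈ [0,∞]` on `F[[t]]`. -/
def gaussNorm (q : ℕ) (f : PowerSeries F) : ℝ≥0∞ :=
  ⨆ m : ℕ, (‖PowerSeries.coeff m f‖₊ : ℝ≥0∞) * (q : ℝ≥0∞) ^ m

/-- `n`-fold Frobenius (`q^n`-th power) twist of a polynomial, applied coefficientwise. -/
def ptwist (q n : ℕ) (P : Polynomial F) : Polynomial F :=
  ∑ j ∈ Finset.range (P.natDegree + 1), Polynomial.C (P.coeff j ^ q ^ n) * Polynomial.X ^ j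

/-- The product over `m = 1,…,n` of
`(Π_{k_{m−1} ≤ k < k_m} Q_k^{(m−1)}) · ((t−θ^{q^m})^{d_{k_m}})⁻¹`,
attached to a weakly increasing chain `kc : Fin (n+1) → ℕ`; the inverse is taken in
`F[[t]]` and empty products equal `1`. -/
def chainProd (q : ℕ) (θ : F) (d : ℕ → ℕ) (Q : ℕ → Polynomial F) {n : ℕ}
    (kc : Fin (n + 1) → ℕ) : PowerSeries F :=
  ∏ m : Fin n,
    (∏ k ∈ Finset.Ico (kc m.castSucc) (kc m.succ), (ptwist q (m : ℕ) (Q k) : PowerSeries F)) *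
      ((PowerSeries.X - PowerSeries.C (θ ^ q ^ ((m : ℕ) + 1))) ^ d (kc m.succ))⁻¹

/-! ### Auxiliary lemmas -/

lemma gaussNorm_le_of_forall {q : ℕ} {f : PowerSeries F} {x : ℝ}
    (h : ∀ m : ℕ, ‖PowerSeries.coeff m f‖ * (q:ℝ)^m ≤ (q:ℝ) ^ x) :
    gaussNorm q f ≤ ENNReal.ofReal ((q:ℝ) ^ x) := by
  refine iSup_le fun m => ?_
  have he : ((‖PowerSeries.coeff m f‖₊ : ℝ≥0∞)) * (q : ℝ≥0∞) ^ m
      = ENNReal.ofReal (‖PowerSeries.coeff m f‖ * (q:ℝ)^m) := by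
    rw [ENNReal.ofReal_mul (norm_nonneg _), ofReal_norm, enorm_eq_nnnorm,
      ENNReal.ofReal_pow q.cast_nonneg, ENNReal.ofReal_natCast]
  rw [he]
  exact ENNReal.ofReal_le_ofReal (h m)

lemma gaussNorm_one_le (q : ℕ) : gaussNorm q (1 : PowerSeries F) ≤ 1 := by
  refine iSup_le fun m => ?_
  rcases m with _ | m
  · simp [PowerSeries.coeff_zero_eq_constantCoeff]
  · simp [PowerSeries.coeff_one]

lemma gaussNorm_mul_le [IsUltrametricDist F] (q : ℕ) (f g : PowerSeries F) :
    gaussNorm q (f * g) ≤ gaussNorm q f * gaussNorm q g := by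
  refine iSup_le fun m => ?_
  rw [PowerSeries.coeff_mul]
  have hne : (Finset.HasAntidiagonal.antidiagonal m).Nonempty := ⟨(0, m), by simp⟩
  obtain ⟨p, hp, hple⟩ := IsUltrametricDist.exists_norm_finset_sum_le_of_nonempty hne
      (fun p => PowerSeries.coeff p.1 f * PowerSeries.coeff p.2 g)
  have hm : p.1 + p.2 = m := Finset.HasAntidiagonal.mem_antidiagonal.mp hp
  calc (‖∑ p ∈ Finset.HasAntidiagonal.antidiagonal m, PowerSeries.coeff p.1 f * PowerSeries.coeff p.2 g‖₊ : ℝ≥0∞) * (q : ℝ≥0∞) ^ m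
      ≤ (‖PowerSeries.coeff p.1 f * PowerSeries.coeff p.2 g‖₊ : ℝ≥0∞) * (q : ℝ≥0∞) ^ m := by
        gcongr
        exact_mod_cast hple
    _ ≤ ((‖PowerSeries.coeff p.1 f‖₊ * ‖PowerSeries.coeff p.2 g‖₊ : NNReal) : ℝ≥0∞) * (q : ℝ≥0∞) ^ m := by
        gcongr
        exact_mod_cast nnnorm_mul_le _ _
    _ = ((‖PowerSeries.coeff p.1 f‖₊ : ℝ≥0∞) * (q : ℝ≥0∞) ^ p.1) *
        ((‖PowerSeries.coeff p.2 g‖₊ : ℝ≥0∞) * (q : ℝ≥0∞) ^ p.2) := by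
        rw [← hm, pow_add, ENNReal.coe_mul]; ring
    _ ≤ gaussNorm q f * gaussNorm q g := by
        exact mul_le_mul' (le_iSup (fun k => (‖PowerSeries.coeff k f‖₊ : ℝ≥0∞) * (q : ℝ≥0∞) ^ k) p.1)
          (le_iSup (fun k => (‖PowerSeries.coeff k g‖₊ : ℝ≥0∞) * (q : ℝ≥0∞) ^ k) p.2)

lemma gaussNorm_prod_le [IsUltrametricDist F] {ι : Type*} (q : ℕ) (s : Finset ι)
    (f : ι → PowerSeries F) (B : ι → ℝ≥0∞) (h : ∀ i ∈ s, gaussNorm q (f i) ≤ B i) :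
    gaussNorm q (∏ i ∈ s, f i) ≤ ∏ i ∈ s, B i := by
  induction s using Finset.cons_induction with
  | empty => simpa using gaussNorm_one_le q
  | cons a t ha ih =>
      rw [Finset.prod_cons, Finset.prod_cons]
      exact (gaussNorm_mul_le q _ _).trans
        (mul_le_mul' (h a (Finset.mem_cons_self a t)) (ih fun i hi => h i (Finset.mem_cons_of_mem hi)))

lemma gaussNorm_pow_le [IsUltrametricDist F] (q : ℕ) (f : PowerSeries F) (B : ℝ≥0∞)
    (h : gaussNorm q f ≤ B) (k : ℕ) : gaussNorm q (f ^ k) ≤ B ^ k := by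
  have := gaussNorm_prod_le q (Finset.range k) (fun _ => f) (fun _ => B) (fun _ _ => h)
  simpa using this

lemma ptwist_coeff (q tw : ℕ) (P : Polynomial F) (m : ℕ) :
    (ptwist q tw P).coeff m = if m ≤ P.natDegree then P.coeff m ^ q ^ tw else 0 := by
  rw [ptwist, Polynomial.finset_sum_coeff]
  simp only [Polynomial.coeff_C_mul, Polynomial.coeff_X_pow, mul_ite, mul_one, mul_zero]
  simp only [eq_comm (a := m)]
  rw [Finset.sum_ite_eq' (Finset.range (P.natDegree + 1)) m (fun j => P.coeff j ^ q ^ tw)]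
  simp [Nat.lt_succ_iff]

lemma Qr_mul (q : ℕ) (hq : 0 < (q:ℝ)) (x y : ℝ) :
    ENNReal.ofReal ((q:ℝ)^x) * ENNReal.ofReal ((q:ℝ)^y) = ENNReal.ofReal ((q:ℝ)^(x+y)) := by
  rw [Real.rpow_add hq, ENNReal.ofReal_mul (Real.rpow_nonneg hq.le _)]

lemma Qr_pow (q : ℕ) (hq : 0 < (q:ℝ)) (x : ℝ) (k : ℕ) :
    (ENNReal.ofReal ((q:ℝ)^x)) ^ k = ENNReal.ofReal ((q:ℝ)^(x * k)) := by
  rw [← ENNReal.ofReal_pow (Real.rpow_nonneg hq.le _), ← Real.rpow_natCast ((q:ℝ)^x) k,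
    ← Real.rpow_mul hq.le]

lemma Qr_prod {ι : Type*} (q : ℕ) (hq : 0 < (q:ℝ)) (s : Finset ι) (x : ι → ℝ) :
    ∏ i ∈ s, ENNReal.ofReal ((q:ℝ)^(x i)) = ENNReal.ofReal ((q:ℝ)^(∑ i ∈ s, x i)) := by
  induction s using Finset.cons_induction with
  | empty => simp
  | cons a t ha ih => rw [Finset.prod_cons, ih, Qr_mul q hq, Finset.sum_cons]

lemma gaussNorm_X_sub_C_le (q : ℕ) (hq : 1 < (q:ℝ)) (c : F) (v : ℝ) (hv : 1 ≤ v)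
    (hcv : ‖c‖ ≤ (q:ℝ) ^ v) :
    gaussNorm q (PowerSeries.X - PowerSeries.C c) ≤ ENNReal.ofReal ((q:ℝ)^v) := by
  apply gaussNorm_le_of_forall
  intro m
  have h0 : (0:ℝ) < q := by linarith
  rcases m with _ | m
  · simpa [PowerSeries.coeff_zero_eq_constantCoeff] using hcv
  rcases m with _ | m
  · have h1 : (q:ℝ) ^ (1:ℝ) ≤ (q:ℝ) ^ v := Real.rpow_le_rpow_of_exponent_le hq.le hv
    simpa [PowerSeries.coeff_X, PowerSeries.coeff_C, Real.rpow_one] using h1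
  · have hz : PowerSeries.coeff (m+2) (PowerSeries.X - PowerSeries.C c) = 0 := by
      simp [PowerSeries.coeff_X, PowerSeries.coeff_C]
    rw [hz]
    simpa using Real.rpow_nonneg h0.le v

lemma gaussNorm_neg_invUnitsSub_le (q : ℕ) (hq : 1 < (q:ℝ)) (c : F) (hc : c ≠ 0) (v : ℝ)
    (hv : 1 ≤ v) (hcv : ‖c‖ = (q:ℝ) ^ v) :
    gaussNorm q (-PowerSeries.invUnitsSub (Units.mk0 c hc) : PowerSeries F)
      ≤ ENNReal.ofReal ((q:ℝ) ^ (-v)) := by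
  have h0 : (0:ℝ) < q := by linarith
  apply gaussNorm_le_of_forall
  intro m
  have hco : PowerSeries.coeff m (-PowerSeries.invUnitsSub (Units.mk0 c hc) : PowerSeries F)
      = -(c⁻¹ ^ (m+1)) := by
    rw [map_neg, PowerSeries.coeff_invUnitsSub, one_divp, ← inv_pow]
    norm_cast
  rw [hco, norm_neg, norm_pow, norm_inv, hcv, ← Real.rpow_neg_one ((q:ℝ)^v),
    ← Real.rpow_mul h0.le, ← Real.rpow_natCast ((q:ℝ)^(v * -1)) (m+1), ← Real.rpow_mul h0.le,
    ← Real.rpow_natCast (q:ℝ) m, ← Real.rpow_add h0]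
  apply Real.rpow_le_rpow_of_exponent_le hq.le
  have hm : (0:ℝ) ≤ m := Nat.cast_nonneg m
  push_cast
  nlinarith

lemma gaussNorm_inv_pow_le [IsUltrametricDist F] (q : ℕ) (hq : 1 < (q:ℝ)) (c : F) (hc : c ≠ 0)
    (v : ℝ) (hv : 1 ≤ v) (hcv : ‖c‖ = (q:ℝ) ^ v) (dd : ℕ) :
    _root_.gaussNorm q (((PowerSeries.X - PowerSeries.C c) ^ dd)⁻¹)
      ≤ ENNReal.ofReal ((q:ℝ) ^ (-v * dd)) := by
  have h0 : (0:ℝ) < q := by linarith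
  have hinv : ((PowerSeries.X - PowerSeries.C c) ^ dd)⁻¹
      = (-PowerSeries.invUnitsSub (Units.mk0 c hc) : PowerSeries F) ^ dd := by
    rw [PowerSeries.inv_eq_iff_mul_eq_one]
    · rw [← mul_pow]
      have hkey : (-PowerSeries.invUnitsSub (Units.mk0 c hc) : PowerSeries F) *
          (PowerSeries.X - PowerSeries.C c)
          = PowerSeries.invUnitsSub (Units.mk0 c hc) * (PowerSeries.C c - PowerSeries.X) := by
        ring
      rw [hkey]
      have h1 := PowerSeries.invUnitsSub_mul_sub (Units.mk0 c hc)
      simp only [Units.val_mk0] at h1 ⊢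
      rw [h1, one_pow]
    · simp [hc]
  rw [hinv, ← Qr_pow q h0]
  exact gaussNorm_pow_le q _ _ (gaussNorm_neg_invUnitsSub_le q hq c hc v hv hcv) dd

lemma gaussNorm_ptwist_le (q : ℕ) (hq : 1 < (q:ℝ)) (P : Polynomial F) (μk : ℕ) (x : ℝ)
    (hdeg : P.natDegree ≤ μk) (hP : ∀ m, ‖P.coeff m‖ ≤ (q:ℝ) ^ x) (tw : ℕ) :
    gaussNorm q ((ptwist q tw P : Polynomial F) : PowerSeries F)
      ≤ ENNReal.ofReal ((q:ℝ) ^ ((μk:ℝ) + x * (q:ℝ)^(tw:ℕ))) := by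
  have h0 : (0:ℝ) < q := by linarith
  apply gaussNorm_le_of_forall
  intro m
  rw [Polynomial.coeff_coe, ptwist_coeff]
  split_ifs with hm
  · rw [norm_pow]
    have h1 : ‖P.coeff m‖ ^ (q ^ tw) ≤ ((q:ℝ) ^ x) ^ (q ^ tw) :=
      pow_le_pow_left₀ (norm_nonneg _) (hP m) _
    have h2 : (q:ℝ) ^ m ≤ (q:ℝ) ^ μk := pow_le_pow_right₀ hq.le (hm.trans hdeg)
    calc ‖P.coeff m‖ ^ q ^ tw * (q:ℝ) ^ m ≤ ((q:ℝ) ^ x) ^ (q ^ tw) * (q:ℝ) ^ μk := by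
          apply mul_le_mul h1 h2 (by positivity) (by positivity)
      _ = (q:ℝ) ^ ((μk:ℝ) + x * (q:ℝ)^(tw:ℕ)) := by
          rw [← Real.rpow_natCast ((q:ℝ)^x) (q ^ tw), ← Real.rpow_mul h0.le,
            ← Real.rpow_natCast (q:ℝ) μk, ← Real.rpow_add h0]
          push_cast
          ring_nf
  · simp only [norm_zero, zero_mul]
    positivity

/-- key Gauss-norm estimate in the proof of Proposition 4.2 of the paper.
For a weakly increasing chain `ℓ = k_0 ≤ k_1 ≤ ⋯ ≤ k_n = i`, one has
`‖(t−θ^{q^n})^{d_i−j}·Π_{m=1}^{n}(Π_{k_{m−1}≤k<k_m} Q_k^{(m−1)})((t−θ^{q^m})^{d_{k_m}})⁻¹‖_θ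
  ≤ q^{Σ_{ℓ≤k<i} μ_k + d_ℓ q/(q−1) − (j + d_i/(q−1)) q^n}`. -/
theorem statement4
    {F : Type*} [NormedField F] [IsUltrametricDist F]
    (q : ℕ) (hq : IsPrimePow q) (θ : F) (hθ : ‖θ‖ = (q : ℝ))
    (r : ℕ) (hr : 1 ≤ r) (s : ℕ → ℕ) (hs : ∀ k, 1 ≤ k → k ≤ r → 0 < s k)
    (d : ℕ → ℕ) (hd : ∀ i, d i = ∑ k ∈ Finset.Icc i r, s k)
    (μ : ℕ → ℕ) (Q : ℕ → Polynomial F)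
    (hQdeg : ∀ k, 1 ≤ k → k ≤ r - 1 → (Q k).natDegree ≤ μ k)
    (hQ : ∀ k, 1 ≤ k → k ≤ r - 1 → ∀ m,
      ‖(Q k).coeff m‖ ≤ (q : ℝ) ^ ((s k : ℝ) * (q : ℝ) / ((q : ℝ) - 1)))
    (n l i j : ℕ) (hl : 1 ≤ l) (hli : l ≤ i) (hir : i ≤ r) (hj1 : 1 ≤ j) (hj : j ≤ d i)
    (kc : Fin (n + 1) → ℕ) (hmono : Monotone kc) (h0 : kc 0 = l)
    (hlast : kc (Fin.last n) = i) :
    _root_.gaussNorm q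
        ((PowerSeries.X - PowerSeries.C (θ ^ q ^ n)) ^ (d i - j) * chainProd q θ d Q kc)
      ≤ ENNReal.ofReal
          ((q : ℝ) ^ (((∑ k ∈ Finset.Ico l i, μ k : ℕ) : ℝ)
            + (d l : ℝ) * (q : ℝ) / ((q : ℝ) - 1)
            - ((j : ℝ) + (d i : ℝ) / ((q : ℝ) - 1)) * ((q ^ n : ℕ) : ℝ))) := by
  have hq2 : 2 ≤ q := hq.two_le
  have hqR : (1:ℝ) < q := by exact_mod_cast (by omega : 1 < q)
  have hq0 : (0:ℝ) < q := by linarith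
  have hq1 : (q:ℝ) - 1 ≠ 0 := by linarith
  have hθ0 : θ ≠ 0 := by
    intro h; rw [h, norm_zero] at hθ; linarith
  -- the chain as a function on ℕ
  set K : ℕ → ℕ := fun m => kc ⟨min m n, by omega⟩ with hK
  have hKc : ∀ m : Fin n, K (m : ℕ) = kc m.castSucc ∧ K ((m : ℕ) + 1) = kc m.succ := by
    intro m
    constructor
    · show kc _ = kc _
      congr 1
      exact Fin.ext (by simp [Nat.min_eq_left m.isLt.le])
    · show kc _ = kc _
      congr 1
      exact Fin.ext (by simp [Nat.min_eq_left m.isLt])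
  have hK0 : K 0 = l := by
    show kc _ = l
    rw [← h0]
    congr 1
  have hKn : K n = i := by
    show kc _ = i
    rw [← hlast]
    congr 1
    exact Fin.ext (by simp)
  -- sums of s over intervals
  have hdsum : ∀ a b : ℕ, a ≤ b → b ≤ r → (∑ k ∈ Finset.Ico a b, (s k : ℝ)) = (d a : ℝ) - (d b : ℝ) := by
    intro a b hab hbr
    have hnat : d a = (∑ k ∈ Finset.Ico a b, s k) + d b := by
      rw [hd a, hd b, ← Finset.Ico_add_one_right_eq_Icc, ← Finset.Ico_add_one_right_eq_Icc,
        ← Finset.sum_Ico_consecutive _ hab (by omega : b ≤ r + 1)]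
    have := congrArg (fun x : ℕ => (x : ℝ)) hnat
    push_cast at this
    linarith
  -- the telescoping function
  set f : ℕ → ℝ := fun m => (∑ k ∈ Finset.Ico l (K m), (μ k : ℝ))
      - (d (K m) : ℝ) * (q:ℝ)^(m+1) / ((q:ℝ)-1) with hf
  -- per-factor bound
  have hfac : ∀ m : Fin n,
      _root_.gaussNorm q
        ((∏ k ∈ Finset.Ico (kc m.castSucc) (kc m.succ), (ptwist q (m : ℕ) (Q k) : PowerSeries F)) *
          ((PowerSeries.X - PowerSeries.C (θ ^ q ^ ((m : ℕ) + 1))) ^ d (kc m.succ))⁻¹)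
        ≤ ENNReal.ofReal ((q:ℝ) ^ (f ((m : ℕ) + 1) - f (m : ℕ))) := by
    intro m
    set a := kc m.castSucc with ha
    set b := kc m.succ with hb
    have hab : a ≤ b := hmono (Fin.castSucc_le_succ m)
    have hla : l ≤ a := by rw [← h0]; exact hmono (Fin.zero_le _)
    have hbi : b ≤ i := by rw [← hlast]; exact hmono (Fin.le_last _)
    -- bound the twisted polynomial product
    have hpt : gaussNorm q (∏ k ∈ Finset.Ico a b, (ptwist q (m : ℕ) (Q k) : PowerSeries F))
        ≤ ENNReal.ofReal ((q:ℝ) ^ (∑ k ∈ Finset.Ico a b,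
            ((μ k : ℝ) + (s k : ℝ) * (q:ℝ) / ((q:ℝ)-1) * (q:ℝ)^(m:ℕ)))) := by
      rw [← Qr_prod q hq0]
      apply gaussNorm_prod_le
      intro k hk
      rw [Finset.mem_Ico] at hk
      have hk1 : 1 ≤ k := le_trans hl (le_trans hla hk.1)
      have hkr : k ≤ r - 1 := Nat.le_sub_one_of_lt (lt_of_lt_of_le hk.2 (le_trans hbi hir))
      exact gaussNorm_ptwist_le q hqR (Q k) (μ k) _ (hQdeg k hk1 hkr) (hQ k hk1 hkr) (m : ℕ)
    -- bound the inverse factor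
    have hcv : ‖θ ^ q ^ ((m:ℕ)+1)‖ = (q:ℝ) ^ (((q ^ ((m:ℕ)+1) : ℕ) : ℝ)) := by
      rw [norm_pow, hθ, ← Real.rpow_natCast]
    have hiv : _root_.gaussNorm q
        (((PowerSeries.X - PowerSeries.C (θ ^ q ^ ((m : ℕ) + 1))) ^ d b)⁻¹)
        ≤ ENNReal.ofReal ((q:ℝ) ^ (-((q ^ ((m:ℕ)+1) : ℕ) : ℝ) * (d b : ℕ))) :=
      gaussNorm_inv_pow_le q hqR _ (pow_ne_zero _ hθ0) _
        (by exact_mod_cast Nat.one_le_pow _ _ (by omega)) hcv (d b)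
    refine le_trans (gaussNorm_mul_le q _ _) (le_trans (mul_le_mul' hpt hiv) ?_)
    rw [Qr_mul q hq0]
    apply ENNReal.ofReal_le_ofReal
    apply Real.rpow_le_rpow_of_exponent_le hqR.le
    -- now pure real arithmetic
    have hsum1 : (∑ k ∈ Finset.Ico a b,
        ((μ k : ℝ) + (s k : ℝ) * (q:ℝ) / ((q:ℝ)-1) * (q:ℝ)^(m:ℕ)))
        = (∑ k ∈ Finset.Ico a b, (μ k : ℝ))
          + ((d a : ℝ) - (d b : ℝ)) * ((q:ℝ) / ((q:ℝ)-1) * (q:ℝ)^(m:ℕ)) := by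
      rw [Finset.sum_add_distrib, ← hdsum a b hab (le_trans hbi hir), Finset.sum_mul]
      congr 1
      apply Finset.sum_congr rfl
      intro k _
      ring
    have hsum2 : (∑ k ∈ Finset.Ico l b, (μ k : ℝ))
        = (∑ k ∈ Finset.Ico l a, (μ k : ℝ)) + (∑ k ∈ Finset.Ico a b, (μ k : ℝ)) :=
      (Finset.sum_Ico_consecutive _ hla hab).symm
    have hKa : K (m : ℕ) = a := (hKc m).1
    have hKb : K ((m : ℕ) + 1) = b := (hKc m).2
    rw [hf]
    simp only [hKa, hKb, hsum1]
    rw [hsum2]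
    have hcast : ((q ^ ((m:ℕ)+1) : ℕ) : ℝ) = (q:ℝ) ^ ((m:ℕ)+1) := by push_cast; ring
    rw [hcast]
    have hpow : (q:ℝ) ^ ((m:ℕ)+1+1) = (q:ℝ) ^ ((m:ℕ)+1) * (q:ℝ) := by ring
    apply le_of_eq
    field_simp
    ring
  -- bound the chain product
  have hchain : gaussNorm q (chainProd q θ d Q kc)
      ≤ ENNReal.ofReal ((q:ℝ) ^ (f n - f 0)) := by
    rw [chainProd]
    refine le_trans (gaussNorm_prod_le q Finset.univ _
      (fun m : Fin n => ENNReal.ofReal ((q:ℝ) ^ (f ((m:ℕ)+1) - f (m:ℕ)))) (fun m _ => hfac m)) ?_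
    rw [Qr_prod q hq0]
    apply ENNReal.ofReal_le_ofReal
    apply Real.rpow_le_rpow_of_exponent_le hqR.le
    rw [Fin.sum_univ_eq_sum_range (fun m => f (m+1) - f m) n, Finset.sum_range_sub f n]
  -- bound the first factor
  have hfirst : _root_.gaussNorm q ((PowerSeries.X - PowerSeries.C (θ ^ q ^ n)) ^ (d i - j))
      ≤ ENNReal.ofReal ((q:ℝ) ^ (((q ^ n : ℕ) : ℝ) * ((d i - j : ℕ) : ℝ))) := by
    rw [← Qr_pow q hq0]
    apply gaussNorm_pow_le
    apply gaussNorm_X_sub_C_le q hqR _ _ (by exact_mod_cast Nat.one_le_pow _ _ (by omega))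
    rw [norm_pow, hθ, ← Real.rpow_natCast]
  refine le_trans (gaussNorm_mul_le q _ _) (le_trans (mul_le_mul' hfirst hchain) ?_)
  rw [Qr_mul q hq0]
  apply ENNReal.ofReal_le_ofReal
  apply Real.rpow_le_rpow_of_exponent_le hqR.le
  -- final real computation
  have hfn : f n = (∑ k ∈ Finset.Ico l i, (μ k : ℝ)) - (d i : ℝ) * (q:ℝ)^(n+1) / ((q:ℝ)-1) := by
    rw [hf]; simp only [hKn]
  have hf0 : f 0 = -((d l : ℝ) * (q:ℝ) / ((q:ℝ)-1)) := by
    rw [hf]; simp only [hK0]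
    rw [Finset.Ico_self, Finset.sum_empty]
    ring
  rw [hfn, hf0]
  have hc1 : ((d i - j : ℕ) : ℝ) = (d i : ℝ) - (j : ℝ) := by
    rw [Nat.cast_sub hj]
  have hc2 : ((q ^ n : ℕ) : ℝ) = (q:ℝ) ^ n := by push_cast; ring
  have hc3 : ((∑ k ∈ Finset.Ico l i, μ k : ℕ) : ℝ) = ∑ k ∈ Finset.Ico l i, (μ k : ℝ) := by
    push_cast; ring
  rw [hc1, hc2, hc3]
  have hpow : (q:ℝ) ^ (n+1) = (q:ℝ) ^ n * (q:ℝ) := by ring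
  apply le_of_eq
  field_simp
  ring
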